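/- Suppose (A_true,B_true) is controllable and D is input-state data of length T consistent with (A_true,B_true). Then D is Σ_cont-informative for stabilization if and only if D is M-informative for stabilization. -/

import Mathlib

open Matrix

/-- A system: a pair `(A, B)` of real matrices of sizes `n × n` and `n × m`. -/
abbrev Sys (n m : ℕ) := Matrix (Fin n) (Fin n) ℝ × Matrix (Fin n) (Fin m) ℝ

/-- `(A, B)` is consistent with the input-state data `(u, x)` of length `T`. -/
def Consistent {n m T : ℕ} (A : Matrix (Fin n) (Fin n) ℝ) (B : Matrix (Fin n) (Fin m) ℝ)
    (u : Fin T → Fin m → ℝ) (x : Fin (T + 1) → Fin n → ℝ) : Prop :=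
  ∀ t : Fin T, x t.succ = A.mulVec (x t.castSucc) + B.mulVec (u t)

/-- The set `Σ_D` of systems consistent with the data `(u, x)`. -/
def SigmaD {n m T : ℕ} (u : Fin T → Fin m → ℝ) (x : Fin (T + 1) → Fin n → ℝ) :
    Set (Sys n m) :=
  {AB | Consistent AB.1 AB.2 u x}

/-- The matrix `X₋ = [x(0) ⋯ x(T-1)]`. -/
def Xminus {n T : ℕ} (x : Fin (T + 1) → Fin n → ℝ) : Matrix (Fin n) (Fin T) ℝ :=
  Matrix.of fun i t => x t.castSucc i

/-- The matrix `X₊ = [x(1) ⋯ x(T)]`. -/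
def Xplus {n T : ℕ} (x : Fin (T + 1) → Fin n → ℝ) : Matrix (Fin n) (Fin T) ℝ :=
  Matrix.of fun i t => x t.succ i

/-- The matrix `U₋ = [u(0) ⋯ u(T-1)]`. -/
def Uminus {m T : ℕ} (u : Fin T → Fin m → ℝ) : Matrix (Fin m) (Fin T) ℝ :=
  Matrix.of fun i t => u t i

/-- The stacked matrix `[X₋; U₋]`. -/
def stacked {n m T : ℕ} (X : Matrix (Fin n) (Fin T) ℝ) (U : Matrix (Fin m) (Fin T) ℝ) :
    Matrix (Fin n ⊕ Fin m) (Fin T) ℝ :=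
  Matrix.fromRows X U

/-- A real square matrix is Schur if all its complex eigenvalues have modulus `< 1`. -/
def Schur {n : ℕ} (M : Matrix (Fin n) (Fin n) ℝ) : Prop :=
  ∀ μ ∈ spectrum ℂ (M.map ((↑·) : ℝ → ℂ)), ‖μ‖ < 1

/-- The matrix `[C  AC  ⋯  A^{n-1}C]`. -/
def reachMat {n : ℕ} (A : Matrix (Fin n) (Fin n) ℝ) {p : Type*} (C : Matrix (Fin n) p ℝ) :
    Matrix (Fin n) (Fin n × p) ℝ :=
  Matrix.of fun i q => (A ^ (q.1 : ℕ) * C) i q.2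

/-- The column span of a matrix, as a submodule. -/
def colSpan {p : Type*} {q : Type*} [Fintype q] (M : Matrix p q ℝ) :
    Submodule ℝ (p → ℝ) :=
  LinearMap.range M.mulVecLin

/-- The reachable subspace `R(A, C)`: the column span of `[C AC ⋯ A^{n-1}C]`. -/
def Rspace {n : ℕ} (A : Matrix (Fin n) (Fin n) ℝ) {p : Type*} [Fintype p]
    (C : Matrix (Fin n) p ℝ) : Submodule ℝ (Fin n → ℝ) :=
  colSpan (reachMat A C)

/-- `(A, B)` is controllable. -/
def Controllable {n m : ℕ} (A : Matrix (Fin n) (Fin n) ℝ) (B : Matrix (Fin n) (Fin m) ℝ) :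
    Prop :=
  (reachMat A B).rank = n

/-- `(A, B)` is stabilizable. -/
def Stabilizable {n m : ℕ} (A : Matrix (Fin n) (Fin n) ℝ) (B : Matrix (Fin n) (Fin m) ℝ) :
    Prop :=
  ∃ K : Matrix (Fin m) (Fin n) ℝ, Schur (A + B * K)

/-- The set `Σ_cont` of controllable systems. -/
def SigmaCont (n m : ℕ) : Set (Sys n m) := {AB | Controllable AB.1 AB.2}

/-- The set `Σ_stab` of stabilizable systems. -/
def SigmaStab (n m : ℕ) : Set (Sys n m) := {AB | Stabilizable AB.1 AB.2}

/-- Data `(u, x)` is `P`-informative for identification: `Σ_D ∩ P` is a singleton. -/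
def InfId {n m T : ℕ} (P : Set (Sys n m)) (u : Fin T → Fin m → ℝ)
    (x : Fin (T + 1) → Fin n → ℝ) : Prop :=
  ∃ s : Sys n m, SigmaD u x ∩ P = {s}

/-- Data `(u, x)` is `P`-informative for stabilization. -/
def InfStab {n m T : ℕ} (P : Set (Sys n m)) (u : Fin T → Fin m → ℝ)
    (x : Fin (T + 1) → Fin n → ℝ) : Prop :=
  ∃ K : Matrix (Fin m) (Fin n) ℝ, ∀ AB ∈ SigmaD u x ∩ P, Schur (AB.1 + AB.2 * K)

/-- An input is `P`-universal for identification. -/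
def UnivId {n m T : ℕ} (P : Set (Sys n m)) (u : Fin T → Fin m → ℝ) : Prop :=
  ∀ AB ∈ P, ∀ x : Fin (T + 1) → Fin n → ℝ, Consistent AB.1 AB.2 u x → InfId P u x

/-- An input is `P`-universal for stabilization. -/
def UnivStab {n m T : ℕ} (P : Set (Sys n m)) (u : Fin T → Fin m → ℝ) : Prop :=
  ∀ AB ∈ P, ∀ x : Fin (T + 1) → Fin n → ℝ, Consistent AB.1 AB.2 u x → InfStab P u x

/-- The Hankel matrix of depth `k` of the input sequence `u`. -/
def Hankel {m T : ℕ} (u : Fin T → Fin m → ℝ) (k : ℕ) :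
    Matrix (Fin k × Fin m) (Fin (T + 1 - k)) ℝ :=
  Matrix.of fun q i =>
    u ⟨i.val + q.1.val, by have h1 := i.isLt; have h2 := q.1.isLt; omega⟩ q.2

/-- The input sequence `u` is persistently exciting of order `k`. -/
def PE {m T : ℕ} (u : Fin T → Fin m → ℝ) (k : ℕ) : Prop :=
  (Hankel u k).rank = k * m

/-- The matrix `[B  x₀]` obtained by appending the column `x₀` to `B`. -/
def augCol {n m : ℕ} (B : Matrix (Fin n) (Fin m) ℝ) (x0 : Fin n → ℝ) :
    Matrix (Fin n) (Fin m ⊕ Fin 1) ℝ :=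
  Matrix.fromCols B (Matrix.of fun i _ => x0 i)

/-- Precomposition with `Sum.inl`, extracting the `ℝ^n`-component of a vector in
`ℝ^n × ℝ^m ≃ (Fin n ⊕ Fin m) → ℝ`. -/
def projN (n m : ℕ) : ((Fin n ⊕ Fin m) → ℝ) →ₗ[ℝ] (Fin n → ℝ) :=
  LinearMap.funLeft ℝ ℝ Sum.inl


section Helpers
open Polynomial

lemma spec_iff_charpoly {n : ℕ} (N : Matrix (Fin n) (Fin n) ℂ) (μ : ℂ) :
    μ ∈ spectrum ℂ N ↔ N.charpoly.eval μ = 0 := by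
  have halg : algebraMap ℂ (Matrix (Fin n) (Fin n) ℂ) μ = Matrix.scalar (Fin n) μ := by
    rw [Matrix.scalar_apply, Matrix.algebraMap_eq_diagonal]
    rfl
  have hd : N.charpoly.eval μ = (Matrix.scalar (Fin n) μ - N).det := by
    rw [Matrix.charpoly, eval_det, Matrix.matPolyEquiv_charmatrix]
    simp
  rw [spectrum.mem_iff, halg, hd, Matrix.isUnit_iff_isUnit_det, isUnit_iff_ne_zero, not_ne_iff]

lemma charpoly_complexify {n : ℕ} (M : Matrix (Fin n) (Fin n) ℝ) :
    (M.map ((↑·) : ℝ → ℂ)).charpoly = M.charpoly.map Complex.ofRealHom :=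
  Matrix.charpoly_map M Complex.ofRealHom

/-- Schur depends only on the characteristic polynomial. -/
lemma schur_of_charpoly_eq {n : ℕ} {M M' : Matrix (Fin n) (Fin n) ℝ}
    (h : M.charpoly = M'.charpoly) (hM : Schur M) : Schur M' := by
  intro μ hμ
  apply hM
  rw [spec_iff_charpoly, charpoly_complexify] at hμ ⊢
  rw [h]
  exact hμ

/-- A square real matrix has full rank iff its determinant is nonzero. -/
lemma rank_eq_iff_det_ne_zero {n : ℕ} (G : Matrix (Fin n) (Fin n) ℝ) :
    G.rank = n ↔ G.det ≠ 0 := by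
  constructor
  · intro h hdet
    have hr : LinearMap.range G.mulVecLin = ⊤ := by
      apply Submodule.eq_top_of_finrank_eq
      rw [← Matrix.rank, h]
      simp [Module.finrank_pi]
    have hs : Function.Surjective G.mulVec := LinearMap.range_eq_top.mp hr
    have := Matrix.mulVec_surjective_iff_isUnit.mp hs
    rw [Matrix.isUnit_iff_isUnit_det, isUnit_iff_ne_zero] at this
    exact this hdet
  · intro h
    have : IsUnit G := (Matrix.isUnit_iff_isUnit_det G).mpr (isUnit_iff_ne_zero.mpr h)
    rw [Matrix.rank_of_isUnit G this, Fintype.card_fin]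

/-- Generic version of `reachMat` over any commutative ring. -/
def reachMat' {n m : ℕ} {S : Type*} [CommRing S] (A : Matrix (Fin n) (Fin n) S)
    (B : Matrix (Fin n) (Fin m) S) : Matrix (Fin n) (Fin n × Fin m) S :=
  Matrix.of fun i q => (A ^ (q.1 : ℕ) * B) i q.2

lemma reachMat'_eq {n m : ℕ} (A : Matrix (Fin n) (Fin n) ℝ) (B : Matrix (Fin n) (Fin m) ℝ) :
    reachMat' A B = reachMat A B := rfl

/-- `reachMat'` commutes with entrywise ring hom application. -/
lemma reachMat'_map {n m : ℕ} {R S : Type*} [CommRing R] [CommRing S]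
    (A : Matrix (Fin n) (Fin n) R) (B : Matrix (Fin n) (Fin m) R) (f : R →+* S) :
    (reachMat' A B).map f = reachMat' (A.map f) (B.map f) := by
  ext i q
  simp only [reachMat', Matrix.map_apply, Matrix.of_apply]
  have : (A ^ (q.1 : ℕ) * B).map f = (A.map f) ^ (q.1 : ℕ) * B.map f := by
    rw [Matrix.map_mul]
    congr 1
    exact map_pow f.mapMatrix A (q.1 : ℕ)
  rw [← this, Matrix.map_apply]

/-- Controllability in terms of the determinant of the reachability Gramian. -/
lemma controllable_iff_det {n m : ℕ} (A : Matrix (Fin n) (Fin n) ℝ)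
    (B : Matrix (Fin n) (Fin m) ℝ) :
    Controllable A B ↔ (reachMat A B * (reachMat A B)ᵀ).det ≠ 0 := by
  rw [Controllable, ← rank_eq_iff_det_ne_zero, Matrix.rank_self_mul_transpose]

end Helpers


/-- If the true system is controllable, then the data is
`Σ_cont`-informative for stabilization iff it is `M`-informative for stabilization. -/
theorem stmt_10 {n m T : ℕ} (hn : 0 < n) (hm : 0 < m)
    (Atrue : Matrix (Fin n) (Fin n) ℝ) (Btrue : Matrix (Fin n) (Fin m) ℝ)
    (hcont : Controllable Atrue Btrue)
    (u : Fin T → Fin m → ℝ) (x : Fin (T + 1) → Fin n → ℝ)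
    (hcons : Consistent Atrue Btrue u x) :
    InfStab (SigmaCont n m) u x ↔ InfStab Set.univ u x := by
  classical
  constructor
  · rintro ⟨K, hK⟩
    refine ⟨K, ?_⟩
    rintro ⟨Ab, Bb⟩ ⟨hD, -⟩
    have htrueD : (Atrue, Btrue) ∈ SigmaD u x := hcons
    have hSchur0 : Schur (Atrue + Btrue * K) := hK (Atrue, Btrue) ⟨htrueD, hcont⟩
    set ΔA : Matrix (Fin n) (Fin n) ℝ := Ab - Atrue with hΔA
    set ΔB : Matrix (Fin n) (Fin m) ℝ := Bb - Btrue with hΔB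
    set A : ℝ → Matrix (Fin n) (Fin n) ℝ := fun t => Atrue + t • ΔA with hA
    set B : ℝ → Matrix (Fin n) (Fin m) ℝ := fun t => Btrue + t • ΔB with hB
    -- every point on the line is consistent with the data
    have hlineD : ∀ t : ℝ, (A t, B t) ∈ SigmaD u x := by
      intro t τ
      have h1 := hcons τ
      have h2 : x τ.succ = Ab.mulVec (x τ.castSucc) + Bb.mulVec (u τ) := hD τ
      show x τ.succ = (A t).mulVec (x τ.castSucc) + (B t).mulVec (u τ)
      have key : (A t).mulVec (x τ.castSucc) + (B t).mulVec (u τ) =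
          (Atrue.mulVec (x τ.castSucc) + Btrue.mulVec (u τ)) +
            t • ((Ab.mulVec (x τ.castSucc) + Bb.mulVec (u τ)) -
              (Atrue.mulVec (x τ.castSucc) + Btrue.mulVec (u τ))) := by
        simp only [hA, hB, hΔA, hΔB, Matrix.add_mulVec, Matrix.sub_mulVec,
          Matrix.smul_mulVec]
        module
      rw [key, ← h1, ← h2]
      simp
    -- controllability holds off the zero set of a nonzero polynomial
    set AP : Matrix (Fin n) (Fin n) (Polynomial ℝ) :=
      Atrue.map Polynomial.C + (Polynomial.X : Polynomial ℝ) • ΔA.map Polynomial.C with hAP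
    set BP : Matrix (Fin n) (Fin m) (Polynomial ℝ) :=
      Btrue.map Polynomial.C + (Polynomial.X : Polynomial ℝ) • ΔB.map Polynomial.C with hBP
    have hAPmap : ∀ t : ℝ, AP.map (Polynomial.evalRingHom t) = A t := by
      intro t
      ext i j
      simp [hAP, hA, Matrix.map_apply, Matrix.add_apply, Matrix.smul_apply, smul_eq_mul]
      ring
    have hBPmap : ∀ t : ℝ, BP.map (Polynomial.evalRingHom t) = B t := by
      intro t
      ext i j
      simp [hBP, hB, Matrix.map_apply, Matrix.add_apply, Matrix.smul_apply, smul_eq_mul]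
      ring
    set RP := reachMat' AP BP with hRP
    set q : Polynomial ℝ := (RP * RPᵀ).det with hq
    have hqeval : ∀ t : ℝ,
        q.eval t = (reachMat (A t) (B t) * (reachMat (A t) (B t))ᵀ).det := by
      intro t
      have h1 : q.eval t = Polynomial.evalRingHom t q := rfl
      rw [h1, hq, RingHom.map_det, RingHom.mapMatrix_apply, Matrix.map_mul,
        Matrix.transpose_map, hRP, reachMat'_map, hAPmap, hBPmap, reachMat'_eq]
    have hq0 : q.eval 0 ≠ 0 := by
      have hA0 : A 0 = Atrue := by simp [hA]
      have hB0 : B 0 = Btrue := by simp [hB]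
      rw [hqeval 0, hA0, hB0]
      exact (controllable_iff_det Atrue Btrue).mp hcont
    have hqne : q ≠ 0 := fun h => hq0 (by rw [h]; simp)
    set S : Set ℝ := {t | q.eval t ≠ 0} with hS
    have hSfin : Sᶜ.Finite := by
      have : Sᶜ = {t | q.IsRoot t} := by
        ext t
        simp [hS, Polynomial.IsRoot]
      rw [this]
      exact Polynomial.finite_setOf_isRoot hqne
    have hctrl : ∀ t ∈ S, Controllable (A t) (B t) := by
      intro t ht
      rw [controllable_iff_det, ← hqeval t]
      exact ht
    -- closed-loop line
    set M0 : Matrix (Fin n) (Fin n) ℝ := Atrue + Btrue * K with hM0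
    set N : Matrix (Fin n) (Fin n) ℝ := ΔA + ΔB * K with hN
    have hMt : ∀ t : ℝ, A t + B t * K = M0 + t • N := by
      intro t
      rw [hM0, hN, hA, hB]
      simp only [Matrix.add_mul, Matrix.smul_mul, smul_add]
      abel
    have hSch : ∀ t ∈ S, Schur (M0 + t • N) := by
      intro t ht
      rw [← hMt t]
      exact hK (A t, B t) ⟨hlineD t, hctrl t ht⟩
    -- the characteristic polynomial along the line
    set MP : Matrix (Fin n) (Fin n) (Polynomial ℝ) :=
      M0.map Polynomial.C + (Polynomial.X : Polynomial ℝ) • N.map Polynomial.C with hMP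
    have hMPmap : ∀ t : ℝ, MP.map (Polynomial.evalRingHom t) = M0 + t • N := by
      intro t
      ext i j
      simp [hMP, Matrix.map_apply, Matrix.add_apply, Matrix.smul_apply, smul_eq_mul]
      ring
    set cp := MP.charpoly with hcp
    have hcpt : ∀ t : ℝ, (M0 + t • N).charpoly = cp.map (Polynomial.evalRingHom t) := by
      intro t
      rw [← hMPmap t, Matrix.charpoly_map]
    -- coefficients of the characteristic polynomial are bounded on S
    set Bd : ℝ := (n.choose (n / 2) : ℝ) with hBd
    have hbdd : ∀ i : ℕ, ∀ t ∈ S, |(cp.coeff i).eval t| ≤ Bd := by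
      intro i t ht
      have hSchur := hSch t ht
      set P := (M0 + t • N).charpoly with hP
      have hmono : P.Monic := Matrix.charpoly_monic _
      have hsplit : Polynomial.Splits (P.map Complex.ofRealHom) :=
        IsAlgClosed.splits _
      have hdeg : P.natDegree ≤ n := by
        rw [hP, Matrix.charpoly_natDegree_eq_dim, Fintype.card_fin]
      have hroots : ∀ z ∈ (P.map Complex.ofRealHom).roots, ‖z‖ ≤ 1 := by
        intro z hz
        have hroot : (P.map Complex.ofRealHom).eval z = 0 :=
          (Polynomial.isRoot_of_mem_roots hz)
        have : z ∈ spectrum ℂ ((M0 + t • N).map ((↑·) : ℝ → ℂ)) := by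
          rw [spec_iff_charpoly, charpoly_complexify]
          exact hroot
        have := hSchur z this
        calc ‖z‖ = ‖z‖ := rfl
          _ ≤ 1 := le_of_lt this
      have := Polynomial.coeff_bdd_of_roots_le Complex.ofRealHom hmono hsplit hdeg hroots i
      rw [Polynomial.coeff_map] at this
      have hnorm : ‖Complex.ofRealHom (P.coeff i)‖ = |P.coeff i| := Complex.norm_real _
      rw [hnorm] at this
      have hPc : P.coeff i = (cp.coeff i).eval t := by
        rw [hP, hcpt t, Polynomial.coeff_map]
        rfl
      rw [hPc] at this
      simpa [hBd] using this
    -- hence each coefficient is a constant polynomial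
    have hSatTop : S ∈ Filter.atTop (α := ℝ) := by
      apply Filter.atTop_le_cofinite
      rw [Filter.mem_cofinite]
      exact hSfin
    have hconst : ∀ i : ℕ, (cp.coeff i).eval 1 = (cp.coeff i).eval 0 := by
      intro i
      have hbound : Filter.IsBoundedUnder (· ≤ ·) Filter.atTop
          (fun t : ℝ => |(cp.coeff i).eval t|) := by
        refine ⟨Bd, ?_⟩
        rw [Filter.eventually_map]
        filter_upwards [hSatTop] with t ht using hbdd i t ht
      have hdeg : (cp.coeff i).degree ≤ 0 :=
        (Polynomial.abs_isBoundedUnder_iff (cp.coeff i)).mp hbound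
      rw [Polynomial.eq_C_of_degree_le_zero hdeg]
      simp
    have hcharpoly : (M0 + (1 : ℝ) • N).charpoly = (M0 + (0 : ℝ) • N).charpoly := by
      ext i
      rw [hcpt 1, hcpt 0, Polynomial.coeff_map, Polynomial.coeff_map]
      exact hconst i
    have hM00 : M0 + (0 : ℝ) • N = M0 := by simp
    have hM01 : M0 + (1 : ℝ) • N = Ab + Bb * K := by
      rw [← hMt 1]
      have : A 1 = Ab := by simp [hA, hΔA]
      have h2 : B 1 = Bb := by simp [hB, hΔB]
      rw [this, h2]
    rw [hM00, hM01] at hcharpoly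
    exact schur_of_charpoly_eq hcharpoly.symm hSchur0
  · rintro ⟨K, hK⟩
    exact ⟨K, fun AB hAB => hK AB ⟨hAB.1, trivial⟩⟩
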